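/- Let m_x, m_y ∈ ℝ, σ_x > 0, s_y > 0 and c ∈ ℝ with c² < σ_x² s_y², and let f be the bivariate Gaussian density on ℝ² with mean (m_x, m_y) and covariance matrix [[σ_x², c],[c, s_y²]]. Fix b ∈ ℝ, set b* = (b − m_y)/s_y and λ = φ(b*)/(1 − Φ(b*)), and let μ̂ = (1/(1 − Φ(b*))) ∫_{ℝ×[b,∞)} x f(x,y) d(x,y). Then (1/(1 − Φ(b*))) ∫_{ℝ×[b,∞)} x² f(x,y) d(x,y) − μ̂² = σ_x² − (c²/s_y²)·λ·(λ − b*); that is, the conditional variance of X given Y ≥ b equals σ_x² − (c²/s_y²)·(φ(b*)/(1−Φ(b*)))·(φ(b*)/(1−Φ(b*)) − b*). -/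

import Mathlib

open MeasureTheory Real Matrix

/-- The standard normal probability density function. -/
noncomputable def stdPdf (t : ℝ) : ℝ := (Real.sqrt (2 * Real.pi))⁻¹ * Real.exp (-t ^ 2 / 2)

/-- The standard normal cumulative distribution function. -/
noncomputable def stdCdf (t : ℝ) : ℝ := ∫ u in Set.Iic t, stdPdf u

/-- The Gaussian density on `ℝᵈ` with mean `μ` and covariance matrix `S`. -/
noncomputable def gaussDensity {d : ℕ} (μ : Fin d → ℝ) (S : Matrix (Fin d) (Fin d) ℝ)
    (z : Fin d → ℝ) : ℝ :=
  (Real.sqrt ((2 * Real.pi) ^ d * S.det))⁻¹ *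
    Real.exp (-(1 / 2) * ((z - μ) ⬝ᵥ (S⁻¹ *ᵥ (z - μ))))

open Set Filter Topology

@[fun_prop] lemma continuous_stdPdf : Continuous stdPdf := by unfold stdPdf; fun_prop

lemma stdPdf_pos (t : ℝ) : 0 < stdPdf t := by
  unfold stdPdf
  positivity

lemma stdPdf_nonneg (t : ℝ) : 0 ≤ stdPdf t := (stdPdf_pos t).le

lemma hasDerivAt_stdPdf (t : ℝ) : HasDerivAt stdPdf (-t * stdPdf t) t := by
  unfold stdPdf
  have h : HasDerivAt (fun t : ℝ => -t ^ 2 / 2) (-t) t := by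
    have := ((hasDerivAt_pow 2 t).neg).div_const 2
    simpa using this.congr_deriv (by ring)
  have := (h.exp).const_mul (Real.sqrt (2 * Real.pi))⁻¹
  simpa [mul_comm, mul_assoc, mul_left_comm] using this

lemma integrable_stdPdf : Integrable stdPdf := by
  have : Integrable (fun u : ℝ => Real.exp (-(1/2 : ℝ) * u ^ 2)) := integrable_exp_neg_mul_sq (by norm_num)
  have h2 : (fun t : ℝ => stdPdf t) = fun t => (Real.sqrt (2 * Real.pi))⁻¹ * Real.exp (-(1/2 : ℝ) * t ^ 2) := by
    funext t; unfold stdPdf; ring_nf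
  rw [show stdPdf = fun t => stdPdf t from rfl, h2]
  exact this.const_mul _

lemma integrable_id_stdPdf : Integrable (fun u : ℝ => u * stdPdf u) := by
  have : Integrable (fun u : ℝ => u * Real.exp (-(1/2 : ℝ) * u ^ 2)) := integrable_mul_exp_neg_mul_sq (by norm_num)
  have h2 : (fun u : ℝ => u * stdPdf u) = fun u => (Real.sqrt (2 * Real.pi))⁻¹ * (u * Real.exp (-(1/2 : ℝ) * u ^ 2)) := by
    funext t; unfold stdPdf; ring_nf
  rw [h2]
  exact this.const_mul _

lemma integrable_sq_stdPdf : Integrable (fun u : ℝ => u ^ 2 * stdPdf u) := by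
  have hb : Integrable (fun u : ℝ => (Real.sqrt (2 * Real.pi))⁻¹ * (4 * Real.exp (-(1/4 : ℝ) * u ^ 2))) :=
    ((integrable_exp_neg_mul_sq (by norm_num : (0:ℝ) < 1/4)).const_mul 4).const_mul _
  refine hb.mono' (Continuous.aestronglyMeasurable (by unfold stdPdf; fun_prop)) ?_
  filter_upwards with u
  have h1 : u ^ 2 ≤ 4 * Real.exp ((1/4 : ℝ) * u ^ 2) := by
    have := Real.add_one_le_exp ((1/4 : ℝ) * u ^ 2)
    nlinarith [Real.exp_pos ((1/4:ℝ) * u ^ 2), sq_nonneg u]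
  have h2 : 0 ≤ u ^ 2 * stdPdf u := mul_nonneg (sq_nonneg u) (stdPdf_nonneg u)
  rw [Real.norm_of_nonneg h2]
  unfold stdPdf
  have hs : (0:ℝ) < (Real.sqrt (2 * Real.pi))⁻¹ := by
    have : (0:ℝ) < Real.sqrt (2 * Real.pi) := Real.sqrt_pos.2 (by positivity)
    positivity
  have : u ^ 2 * Real.exp (-u ^ 2 / 2) ≤ 4 * Real.exp (-(1/4:ℝ) * u ^ 2) := by
    have e : Real.exp (-u^2/2) = Real.exp ((1/4:ℝ) * u^2) * Real.exp (-(3/4:ℝ) * u^2) := by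
      rw [← Real.exp_add]; ring_nf
    have e2 : Real.exp (-(1/4:ℝ) * u^2) = Real.exp ((1/2:ℝ) * u^2) * Real.exp (-(3/4:ℝ) * u^2) := by
      rw [← Real.exp_add]; ring_nf
    rw [e, e2, ← mul_assoc, ← mul_assoc]
    have h4 : u ^ 2 * Real.exp ((1/4:ℝ)*u^2) ≤ 4 * Real.exp ((1/2:ℝ) * u^2) := by
      calc u ^ 2 * Real.exp ((1/4:ℝ)*u^2) ≤ 4 * Real.exp ((1/4:ℝ)*u^2) * Real.exp ((1/4:ℝ)*u^2) := by
            nlinarith [Real.exp_pos ((1/4:ℝ)*u^2)]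
        _ = 4 * Real.exp ((1/2:ℝ) * u^2) := by rw [mul_assoc, ← Real.exp_add]; ring_nf
    exact mul_le_mul_of_nonneg_right h4 (Real.exp_pos _).le
  calc u ^ 2 * ((Real.sqrt (2 * Real.pi))⁻¹ * Real.exp (-u ^ 2 / 2))
      = (Real.sqrt (2 * Real.pi))⁻¹ * (u ^ 2 * Real.exp (-u ^ 2 / 2)) := by ring
    _ ≤ (Real.sqrt (2 * Real.pi))⁻¹ * (4 * Real.exp (-(1/4:ℝ) * u ^ 2)) :=
        mul_le_mul_of_nonneg_left this hs.le

lemma tendsto_stdPdf_atTop : Tendsto stdPdf atTop (𝓝 0) := by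
  have h : Tendsto (fun t : ℝ => -t ^ 2 / 2) atTop atBot := by
    apply tendsto_atBot_mono (f := fun t : ℝ => 1 - t)
    · intro t; nlinarith [sq_nonneg (t - 1)]
    · exact tendsto_atBot_add_const_left _ _ (tendsto_neg_atBot_iff.2 tendsto_id)
  have h2 : Tendsto (fun t : ℝ => (Real.sqrt (2 * Real.pi))⁻¹ * Real.exp (-t ^ 2 / 2)) atTop
      (𝓝 ((Real.sqrt (2 * Real.pi))⁻¹ * 0)) :=
    Tendsto.const_mul _ (Real.tendsto_exp_atBot.comp h)
  rw [mul_zero] at h2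
  exact h2

lemma tendsto_stdPdf_atBot : Tendsto stdPdf atBot (𝓝 0) := by
  have h := tendsto_stdPdf_atTop.comp tendsto_neg_atBot_atTop
  refine h.congr fun t => ?_
  simp [stdPdf, Function.comp, neg_sq]

lemma tendsto_id_stdPdf_atTop : Tendsto (fun t : ℝ => t * stdPdf t) atTop (𝓝 0) := by
  have hg : Tendsto (fun t : ℝ => ((Real.sqrt (2 * Real.pi))⁻¹ * Real.exp 1) * (t ^ 1 * Real.exp (-t))) atTop (𝓝 0) := by
    have := (Real.tendsto_pow_mul_exp_neg_atTop_nhds_zero 1).const_mul ((Real.sqrt (2 * Real.pi))⁻¹ * Real.exp 1)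
    simpa using this
  apply squeeze_zero_norm' _ hg
  filter_upwards [eventually_ge_atTop (0:ℝ)] with t ht
  have h2 : 0 ≤ t * stdPdf t := mul_nonneg ht (stdPdf_nonneg t)
  rw [Real.norm_of_nonneg h2]
  have hexp : Real.exp (-t ^ 2 / 2) ≤ Real.exp 1 * Real.exp (-t) := by
    rw [← Real.exp_add]
    apply Real.exp_le_exp.2
    nlinarith [sq_nonneg (t - 1)]
  have hs : (0:ℝ) ≤ (Real.sqrt (2 * Real.pi))⁻¹ := by positivity
  unfold stdPdf
  calc t * ((Real.sqrt (2 * Real.pi))⁻¹ * Real.exp (-t ^ 2 / 2))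
      ≤ t * ((Real.sqrt (2 * Real.pi))⁻¹ * (Real.exp 1 * Real.exp (-t))) := by
        apply mul_le_mul_of_nonneg_left _ ht
        exact mul_le_mul_of_nonneg_left hexp hs
    _ = (Real.sqrt (2 * Real.pi))⁻¹ * Real.exp 1 * (t ^ 1 * Real.exp (-t)) := by ring

lemma tendsto_id_stdPdf_atBot : Tendsto (fun t : ℝ => t * stdPdf t) atBot (𝓝 0) := by
  have h := (tendsto_id_stdPdf_atTop.neg).comp tendsto_neg_atBot_atTop
  simp only [neg_zero] at h
  refine h.congr fun t => ?_
  simp only [Function.comp]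
  have : stdPdf (-t) = stdPdf t := by simp [stdPdf, neg_sq]
  rw [this]; ring

lemma integral_stdPdf : ∫ u, stdPdf u = 1 := by
  have h : (fun u : ℝ => stdPdf u) = fun u => (Real.sqrt (2 * Real.pi))⁻¹ * Real.exp (-(1/2:ℝ) * u ^ 2) := by
    funext u; unfold stdPdf; ring_nf
  rw [show stdPdf = fun u => stdPdf u from rfl, h, MeasureTheory.integral_const_mul,
    integral_gaussian]
  rw [show Real.pi / (1/2:ℝ) = 2 * Real.pi by ring]
  rw [inv_mul_cancel₀ (Real.sqrt_ne_zero'.2 (by positivity))]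

lemma integral_id_stdPdf : ∫ u, u * stdPdf u = 0 := by
  have h := MeasureTheory.integral_of_hasDerivAt_of_tendsto
    (f := fun u => -stdPdf u) (f' := fun u => u * stdPdf u) (m := 0) (n := 0)
    (fun x => by simpa using (hasDerivAt_stdPdf x).fun_neg) integrable_id_stdPdf
    (by simpa using tendsto_stdPdf_atBot.neg) (by simpa using tendsto_stdPdf_atTop.neg)
  simpa using h

lemma integral_sq_stdPdf : ∫ u, u ^ 2 * stdPdf u = 1 := by
  have hd : ∀ x : ℝ, HasDerivAt (fun u => -(u * stdPdf u)) (x ^ 2 * stdPdf x - stdPdf x) x := by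
    intro x
    have h1 := ((hasDerivAt_id x).fun_mul (hasDerivAt_stdPdf x)).fun_neg
    refine h1.congr_deriv ?_; simp only [id_eq]; ring
  have h := MeasureTheory.integral_of_hasDerivAt_of_tendsto (m := 0) (n := 0) hd
    (integrable_sq_stdPdf.sub integrable_stdPdf)
    (by simpa using tendsto_id_stdPdf_atBot.neg) (by simpa using tendsto_id_stdPdf_atTop.neg)
  rw [MeasureTheory.integral_sub integrable_sq_stdPdf integrable_stdPdf, integral_stdPdf] at h
  linarith

lemma integral_Ioi_stdPdf (a : ℝ) : ∫ u in Ioi a, stdPdf u = 1 - stdCdf a := by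
  have h := MeasureTheory.integral_add_compl (measurableSet_Iic (a := a)) integrable_stdPdf
  rw [compl_Iic, integral_stdPdf] at h
  have : stdCdf a = ∫ u in Iic a, stdPdf u := rfl
  linarith

lemma one_sub_stdCdf_pos (a : ℝ) : 0 < 1 - stdCdf a := by
  rw [← integral_Ioi_stdPdf]
  refine (MeasureTheory.setIntegral_pos_iff_support_of_nonneg_ae
    (Filter.Eventually.of_forall stdPdf_nonneg) integrable_stdPdf.integrableOn).2 ?_
  have hsupp : Function.support stdPdf = Set.univ :=
    Set.eq_univ_of_forall fun x => (stdPdf_pos x).ne'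
  rw [hsupp, Set.univ_inter]
  simp [Real.volume_Ioi]

lemma integral_Ioi_id_stdPdf (a : ℝ) : ∫ u in Ioi a, u * stdPdf u = stdPdf a := by
  have h := MeasureTheory.integral_Ioi_of_hasDerivAt_of_tendsto' (a := a)
    (f := fun u => -stdPdf u) (f' := fun u => u * stdPdf u) (m := 0)
    (fun x _ => by simpa using (hasDerivAt_stdPdf x).fun_neg) integrable_id_stdPdf.integrableOn
    (by simpa using tendsto_stdPdf_atTop.neg)
  simpa using h

lemma integral_Ioi_sq_stdPdf (a : ℝ) :
    ∫ u in Ioi a, u ^ 2 * stdPdf u = a * stdPdf a + (1 - stdCdf a) := by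
  have hd : ∀ x ∈ Ici a, HasDerivAt (fun u => -(u * stdPdf u)) (x ^ 2 * stdPdf x - stdPdf x) x := by
    intro x _
    have h1 := ((hasDerivAt_id x).fun_mul (hasDerivAt_stdPdf x)).fun_neg
    refine h1.congr_deriv ?_; simp only [id_eq]; ring
  have h := MeasureTheory.integral_Ioi_of_hasDerivAt_of_tendsto' (m := 0) hd
    ((integrable_sq_stdPdf.sub integrable_stdPdf).integrableOn)
    (by simpa using tendsto_id_stdPdf_atTop.neg)
  rw [MeasureTheory.integral_sub integrable_sq_stdPdf.integrableOn integrable_stdPdf.integrableOn,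
    integral_Ioi_stdPdf] at h
  linarith

lemma integrable_poly_stdPdf (A B C : ℝ) :
    Integrable (fun u : ℝ => (A + B * u + C * u ^ 2) * stdPdf u) := by
  have h : Integrable (fun u : ℝ => A * stdPdf u + B * (u * stdPdf u) + C * (u ^ 2 * stdPdf u)) :=
    ((integrable_stdPdf.const_mul A).add (integrable_id_stdPdf.const_mul B)).add
      (integrable_sq_stdPdf.const_mul C)
  exact h.congr (Filter.Eventually.of_forall fun u => by ring)

lemma integral_poly_stdPdf (A B C : ℝ) :
    ∫ u, (A + B * u + C * u ^ 2) * stdPdf u = A + C := by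
  have h : (fun u : ℝ => (A + B * u + C * u ^ 2) * stdPdf u)
      = fun u => A * stdPdf u + B * (u * stdPdf u) + C * (u ^ 2 * stdPdf u) :=
    funext fun u => by ring
  have i1 : Integrable (fun u : ℝ => A * stdPdf u) := integrable_stdPdf.const_mul A
  have i2 : Integrable (fun u : ℝ => B * (u * stdPdf u)) := integrable_id_stdPdf.const_mul B
  have i3 : Integrable (fun u : ℝ => C * (u ^ 2 * stdPdf u)) := integrable_sq_stdPdf.const_mul C
  have i12 : Integrable (fun u : ℝ => A * stdPdf u + B * (u * stdPdf u)) := i1.add i2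
  rw [h, MeasureTheory.integral_add i12 i3, MeasureTheory.integral_add i1 i2,
    MeasureTheory.integral_const_mul, MeasureTheory.integral_const_mul,
    MeasureTheory.integral_const_mul, integral_stdPdf, integral_id_stdPdf, integral_sq_stdPdf]
  ring

lemma integral_Ioi_poly_stdPdf (A B C a : ℝ) :
    ∫ u in Ioi a, (A + B * u + C * u ^ 2) * stdPdf u
      = (A + C) * (1 - stdCdf a) + (B + C * a) * stdPdf a := by
  have h : (fun u : ℝ => (A + B * u + C * u ^ 2) * stdPdf u)
      = fun u => A * stdPdf u + B * (u * stdPdf u) + C * (u ^ 2 * stdPdf u) :=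
    funext fun u => by ring
  have i1 : IntegrableOn (fun u : ℝ => A * stdPdf u) (Ioi a) :=
    (integrable_stdPdf.const_mul A).integrableOn
  have i2 : IntegrableOn (fun u : ℝ => B * (u * stdPdf u)) (Ioi a) :=
    (integrable_id_stdPdf.const_mul B).integrableOn
  have i3 : IntegrableOn (fun u : ℝ => C * (u ^ 2 * stdPdf u)) (Ioi a) :=
    (integrable_sq_stdPdf.const_mul C).integrableOn
  have i12 : IntegrableOn (fun u : ℝ => A * stdPdf u + B * (u * stdPdf u)) (Ioi a) := i1.add i2
  rw [h, MeasureTheory.integral_add i12 i3, MeasureTheory.integral_add i1 i2,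
    MeasureTheory.integral_const_mul, MeasureTheory.integral_const_mul,
    MeasureTheory.integral_const_mul, integral_Ioi_stdPdf, integral_Ioi_id_stdPdf,
    integral_Ioi_sq_stdPdf]
  ring

lemma integral_comp_affine (g : ℝ → ℝ) (m : ℝ) {s : ℝ} (hs : 0 < s) :
    ∫ x, g ((x - m) / s) = s * ∫ u, g u := by
  have h1 : ∫ x, g ((x - m) / s) = ∫ x, (fun t => g (t / s)) (x - m) := rfl
  rw [h1, integral_sub_right_eq_self (fun t => g (t / s)) m,
    MeasureTheory.Measure.integral_comp_div g s, abs_of_pos hs, smul_eq_mul]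

lemma integrable_comp_affine {g : ℝ → ℝ} (hg : Integrable g) (m : ℝ) {s : ℝ} (hs : s ≠ 0) :
    Integrable (fun x => g ((x - m) / s)) := by
  have h1 : Integrable (fun t : ℝ => g (t * s⁻¹)) := hg.comp_mul_right' (inv_ne_zero hs)
  have h2 := h1.comp_sub_right m
  simpa [div_eq_mul_inv] using h2

lemma setIntegral_Ioi_comp_affine (g : ℝ → ℝ) (a m : ℝ) {s : ℝ} (hs : 0 < s) :
    ∫ x in Ioi a, g ((x - m) / s) = s * ∫ u in Ioi ((a - m) / s), g u := by
  have h1 : ∀ x : ℝ, (x - m) / s = s⁻¹ * (x - m) := fun x => by ring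
  have hshift : ∫ x in Ioi a, (fun t => g (s⁻¹ * t)) (x - m)
      = ∫ t in Ioi (a - m), g (s⁻¹ * t) := by
    rw [← MeasureTheory.integral_indicator measurableSet_Ioi,
      ← MeasureTheory.integral_indicator measurableSet_Ioi]
    have heq : (fun x : ℝ => (Ioi a).indicator (fun x => (fun t => g (s⁻¹ * t)) (x - m)) x)
        = fun x : ℝ => (fun y => (Ioi (a - m)).indicator (fun t => g (s⁻¹ * t)) y) (x - m) := by
      funext x
      simp only [Set.indicator_apply, Set.mem_Ioi, sub_lt_sub_iff_right]
    rw [heq, integral_sub_right_eq_self ((Ioi (a - m)).indicator fun t => g (s⁻¹ * t)) m]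
  calc ∫ x in Ioi a, g ((x - m) / s) = ∫ x in Ioi a, (fun t => g (s⁻¹ * t)) (x - m) := by
        simp_rw [h1]
    _ = ∫ t in Ioi (a - m), g (s⁻¹ * t) := hshift
    _ = s * ∫ u in Ioi ((a - m) / s), g u := by
        rw [MeasureTheory.integral_comp_mul_left_Ioi g _ (inv_pos.2 hs), inv_inv, smul_eq_mul,
          inv_mul_eq_div]

noncomputable def npdf (m s x : ℝ) : ℝ := s⁻¹ * stdPdf ((x - m) / s)

lemma npdf_nonneg (m : ℝ) {s : ℝ} (hs : 0 < s) (x : ℝ) : 0 ≤ npdf m s x :=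
  mul_nonneg (inv_nonneg.2 hs.le) (stdPdf_nonneg _)

lemma poly_npdf_eq (α β γ m : ℝ) {s : ℝ} (hs : s ≠ 0) :
    (fun x : ℝ => (α + β * x + γ * x ^ 2) * npdf m s x)
      = fun x => (fun u => s⁻¹ * (((α + β * m + γ * m ^ 2) + ((β + 2 * γ * m) * s) * u
          + (γ * s ^ 2) * u ^ 2) * stdPdf u)) ((x - m) / s) := by
  funext x
  simp only [npdf]
  have hx : s * ((x - m) / s) + m = x := by field_simp; ring
  set u := (x - m) / s with hu
  rw [← hx]
  ring

lemma integrable_poly_npdf (α β γ m : ℝ) {s : ℝ} (hs : 0 < s) :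
    Integrable (fun x : ℝ => (α + β * x + γ * x ^ 2) * npdf m s x) := by
  rw [poly_npdf_eq α β γ m hs.ne']
  exact integrable_comp_affine ((integrable_poly_stdPdf _ _ _).const_mul _) m hs.ne'

lemma integral_poly_npdf (α β γ m : ℝ) {s : ℝ} (hs : 0 < s) :
    ∫ x, (α + β * x + γ * x ^ 2) * npdf m s x = α + β * m + γ * (s ^ 2 + m ^ 2) := by
  rw [poly_npdf_eq α β γ m hs.ne', integral_comp_affine (fun u => s⁻¹ * ((α + β * m + γ * m ^ 2 + (β + 2 * γ * m) * s * u + γ * s ^ 2 * u ^ 2) * stdPdf u)) m hs,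
    MeasureTheory.integral_const_mul, integral_poly_stdPdf]
  field_simp
  ring

lemma integral_Ioi_poly_npdf (α β γ m a : ℝ) {s : ℝ} (hs : 0 < s) :
    ∫ x in Ioi a, (α + β * x + γ * x ^ 2) * npdf m s x
      = (α + β * m + γ * (s ^ 2 + m ^ 2)) * (1 - stdCdf ((a - m) / s))
        + ((β + 2 * γ * m) * s + γ * s ^ 2 * ((a - m) / s)) * stdPdf ((a - m) / s) := by
  rw [poly_npdf_eq α β γ m hs.ne', setIntegral_Ioi_comp_affine (fun u => s⁻¹ * ((α + β * m + γ * m ^ 2 + (β + 2 * γ * m) * s * u + γ * s ^ 2 * u ^ 2) * stdPdf u)) a m hs,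
    MeasureTheory.integral_const_mul, integral_Ioi_poly_stdPdf]
  set Φ := stdCdf ((a - m) / s)
  set ψ := stdPdf ((a - m) / s)
  field_simp
  ring
lemma gauss_factor (mx my σx sy c : ℝ) (hσx : 0 < σx) (hsy : 0 < sy)
    (hc : c ^ 2 < σx ^ 2 * sy ^ 2) (x y : ℝ) :
    gaussDensity ![mx, my] !![σx ^ 2, c; c, sy ^ 2] ![x, y]
      = npdf (mx + (c / sy ^ 2) * (y - my)) (Real.sqrt (σx ^ 2 - c ^ 2 / sy ^ 2)) x
        * npdf my sy y := by
  have hτ2 : 0 < σx ^ 2 - c ^ 2 / sy ^ 2 := by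
    rw [sub_pos, div_lt_iff₀ (by positivity)]
    linarith
  set τ := Real.sqrt (σx ^ 2 - c ^ 2 / sy ^ 2) with hτdef
  have hτ : 0 < τ := Real.sqrt_pos.2 hτ2
  have hτsq : τ ^ 2 = σx ^ 2 - c ^ 2 / sy ^ 2 := Real.sq_sqrt hτ2.le
  have hdet : (!![σx ^ 2, c; c, sy ^ 2] : Matrix (Fin 2) (Fin 2) ℝ).det
      = σx ^ 2 * sy ^ 2 - c ^ 2 := by
    simp [Matrix.det_fin_two_of]; ring
  have hinv : (!![σx ^ 2, c; c, sy ^ 2] : Matrix (Fin 2) (Fin 2) ℝ)⁻¹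
      = (σx ^ 2 * sy ^ 2 - c ^ 2)⁻¹ • !![sy ^ 2, -c; -c, σx ^ 2] := by
    rw [Matrix.inv_def, Matrix.adjugate_fin_two_of, hdet, Ring.inverse_eq_inv']
  have hQ : (![x, y] - ![mx, my]) ⬝ᵥ
        ((!![σx ^ 2, c; c, sy ^ 2] : Matrix (Fin 2) (Fin 2) ℝ)⁻¹ *ᵥ (![x, y] - ![mx, my]))
      = (σx ^ 2 * sy ^ 2 - c ^ 2)⁻¹ *
        (sy ^ 2 * (x - mx) ^ 2 - 2 * c * (x - mx) * (y - my) + σx ^ 2 * (y - my) ^ 2) := by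
    rw [hinv]
    simp [Matrix.mulVec, dotProduct, Fin.sum_univ_two, Matrix.smul_apply, Pi.sub_apply,
      smul_eq_mul]
    ring
  have hdet2 : σx ^ 2 * sy ^ 2 - c ^ 2 = (τ * sy) ^ 2 := by
    rw [mul_pow, hτsq]
    field_simp
  have hσeq : σx ^ 2 = τ ^ 2 + c ^ 2 / sy ^ 2 := by rw [hτsq]; ring
  unfold gaussDensity
  rw [hQ, hdet, hdet2]
  have hexp : -(1 / 2 : ℝ) * (((τ * sy) ^ 2)⁻¹ *
        (sy ^ 2 * (x - mx) ^ 2 - 2 * c * (x - mx) * (y - my) + σx ^ 2 * (y - my) ^ 2))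
      = -((x - (mx + c / sy ^ 2 * (y - my))) / τ) ^ 2 / 2 + -((y - my) / sy) ^ 2 / 2 := by
    rw [hσeq]
    field_simp
    ring
  rw [hexp, Real.exp_add]
  unfold npdf stdPdf
  have hsqrt : Real.sqrt ((2 * Real.pi) ^ 2 * (τ * sy) ^ 2) = 2 * Real.pi * (τ * sy) := by
    rw [← mul_pow, Real.sqrt_sq (by positivity)]
  rw [hsqrt]
  have h2π : Real.sqrt (2 * Real.pi) * Real.sqrt (2 * Real.pi) = 2 * Real.pi :=
    Real.mul_self_sqrt (by positivity)
  have hrw : 2 * Real.pi * (τ * sy)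
      = Real.sqrt (2 * Real.pi) * Real.sqrt (2 * Real.pi) * τ * sy := by rw [h2π]; ring
  rw [hrw]
  have hsq2π : Real.sqrt (2 * Real.pi) ≠ 0 := by positivity
  field_simp

lemma integrable_npdf (m : ℝ) {s : ℝ} (hs : 0 < s) : Integrable (npdf m s) := by
  unfold npdf
  exact (integrable_comp_affine integrable_stdPdf m hs.ne').const_mul _

lemma integral_npdf (m : ℝ) {s : ℝ} (hs : 0 < s) : ∫ x, npdf m s x = 1 := by
  have h := integral_poly_npdf 1 0 0 m hs
  simpa using h

theorem bivariate_censored_conditional_variance_upper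
    (mx my σx sy c : ℝ) (hσx : 0 < σx) (hsy : 0 < sy) (hc : c ^ 2 < σx ^ 2 * sy ^ 2)
    (f : ℝ → ℝ → ℝ)
    (hf : ∀ x y, f x y = gaussDensity ![mx, my] !![σx ^ 2, c; c, sy ^ 2] ![x, y])
    (b bstar lam μhat : ℝ)
    (hbstar : bstar = (b - my) / sy)
    (hlam : lam = stdPdf bstar / (1 - stdCdf bstar))
    (hμhat : μhat = (1 - stdCdf bstar)⁻¹ *
      ∫ p in (Set.univ ×ˢ Set.Ici b : Set (ℝ × ℝ)), p.1 * f p.1 p.2) :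
    (1 - stdCdf bstar)⁻¹ *
        (∫ p in (Set.univ ×ˢ Set.Ici b : Set (ℝ × ℝ)), p.1 ^ 2 * f p.1 p.2)
      - μhat ^ 2
      = σx ^ 2 - (c ^ 2 / sy ^ 2) * lam * (lam - bstar) := by
  have hτ2 : 0 < σx ^ 2 - c ^ 2 / sy ^ 2 := by
    rw [sub_pos, div_lt_iff₀ (by positivity)]
    linarith
  set τ := Real.sqrt (σx ^ 2 - c ^ 2 / sy ^ 2) with hτdef
  have hτ : 0 < τ := Real.sqrt_pos.2 hτ2
  have hτsq : τ ^ 2 = σx ^ 2 - c ^ 2 / sy ^ 2 := Real.sq_sqrt hτ2.le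
  set ρ : ℝ := c / sy ^ 2 with hρdef
  have hFact : ∀ x y : ℝ, f x y = npdf (mx + ρ * (y - my)) τ x * npdf my sy y := fun x y => by
    rw [hf]; exact gauss_factor mx my σx sy c hσx hsy hc x y
  -- the joint densities
  set N : ℝ × ℝ → ℝ := fun p => npdf (mx + ρ * (p.2 - my)) τ p.1 * npdf my sy p.2 with hNdef
  have hNcont : Continuous N := by
    unfold N
    unfold npdf
    fun_prop (disch := exact hτ.ne')
  have hNnonneg : ∀ p : ℝ × ℝ, 0 ≤ N p := fun p =>
    mul_nonneg (npdf_nonneg _ hτ _) (npdf_nonneg _ hsy _)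
  -- integrability of (α + β x + γ x²) * N for even polys
  have hInt : ∀ α β γ : ℝ, (∀ x : ℝ, 0 ≤ α + β * x + γ * x ^ 2) →
      Integrable (fun p : ℝ × ℝ => (α + β * p.1 + γ * p.1 ^ 2) * N p) := by
    intro α β γ hpos
    rw [MeasureTheory.Measure.volume_eq_prod]
    have hasm : AEStronglyMeasurable (fun p : ℝ × ℝ => (α + β * p.1 + γ * p.1 ^ 2) * N p)
        ((volume : Measure ℝ).prod (volume : Measure ℝ)) := by
      apply Continuous.aestronglyMeasurable
      fun_prop
    rw [MeasureTheory.integrable_prod_iff' hasm]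
    constructor
    · filter_upwards with y
      have h1 : Integrable (fun x : ℝ => ((α + β * x + γ * x ^ 2) *
          npdf (mx + ρ * (y - my)) τ x) * npdf my sy y) :=
        (integrable_poly_npdf α β γ _ hτ).mul_const _
      exact h1.congr (Filter.Eventually.of_forall fun x => by unfold N; ring)
    · have key : ∀ y : ℝ, (∫ x, ‖(α + β * x + γ * x ^ 2) * N (x, y)‖)
          = (α + β * (mx + ρ * (y - my)) + γ * (τ ^ 2 + (mx + ρ * (y - my)) ^ 2))
            * npdf my sy y := by
        intro y
        have hn : ∀ x : ℝ, ‖(α + β * x + γ * x ^ 2) * N (x, y)‖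
            = ((α + β * x + γ * x ^ 2) * npdf (mx + ρ * (y - my)) τ x) * npdf my sy y := by
          intro x
          rw [Real.norm_of_nonneg (mul_nonneg (hpos x) (hNnonneg (x, y)))]
          unfold N; ring
        rw [MeasureTheory.integral_congr_ae (Filter.Eventually.of_forall hn),
          MeasureTheory.integral_mul_const, integral_poly_npdf α β γ _ hτ]
      rw [MeasureTheory.integrable_congr (Filter.Eventually.of_forall key)]
      have expand : (fun y : ℝ => (α + β * (mx + ρ * (y - my)) + γ * (τ ^ 2 + (mx + ρ * (y - my)) ^ 2)) * npdf my sy y)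
          = fun y : ℝ => ((α + β * (mx - ρ * my) + γ * (τ ^ 2 + (mx - ρ * my) ^ 2))
              + (β * ρ + 2 * γ * (mx - ρ * my) * ρ) * y + (γ * ρ ^ 2) * y ^ 2) * npdf my sy y :=
        funext fun y => by ring
      rw [expand]
      exact integrable_poly_npdf _ _ _ my hsy
  -- the measure rewrite
  have hmeas : (volume : Measure (ℝ × ℝ)).restrict (Set.univ ×ˢ Set.Ici b)
      = ((volume : Measure ℝ).prod ((volume : Measure ℝ).restrict (Set.Ici b))) := by
    rw [MeasureTheory.Measure.volume_eq_prod, ← MeasureTheory.Measure.prod_restrict,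
      MeasureTheory.Measure.restrict_univ]
  -- generic computation of the censored integral
  have comp : ∀ α β γ : ℝ, Integrable (fun p : ℝ × ℝ => (α + β * p.1 + γ * p.1 ^ 2) * N p) →
      ∫ p in (Set.univ ×ˢ Set.Ici b : Set (ℝ × ℝ)), (α + β * p.1 + γ * p.1 ^ 2) * f p.1 p.2
        = ∫ y in Set.Ici b, (α + β * (mx + ρ * (y - my))
            + γ * (τ ^ 2 + (mx + ρ * (y - my)) ^ 2)) * npdf my sy y := by
    intro α β γ hint
    have h1 : ∫ p in (Set.univ ×ˢ Set.Ici b : Set (ℝ × ℝ)), (α + β * p.1 + γ * p.1 ^ 2) * f p.1 p.2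
        = ∫ p in (Set.univ ×ˢ Set.Ici b : Set (ℝ × ℝ)), (α + β * p.1 + γ * p.1 ^ 2) * N p :=
      MeasureTheory.integral_congr_ae (Filter.Eventually.of_forall fun p => by
        simp only [hFact p.1 p.2]; rfl)
    rw [h1]
    have hint2 : Integrable (fun p : ℝ × ℝ => (α + β * p.1 + γ * p.1 ^ 2) * N p)
        ((volume : Measure ℝ).prod ((volume : Measure ℝ).restrict (Set.Ici b))) := by
      rw [← hmeas]
      exact hint.restrict
    calc ∫ p in (Set.univ ×ˢ Set.Ici b : Set (ℝ × ℝ)), (α + β * p.1 + γ * p.1 ^ 2) * N p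
        = ∫ p, (α + β * p.1 + γ * p.1 ^ 2) * N p
            ∂((volume : Measure ℝ).prod ((volume : Measure ℝ).restrict (Set.Ici b))) := by
          rw [hmeas]
      _ = ∫ y in Set.Ici b, ∫ x, (α + β * x + γ * x ^ 2) * N (x, y) := by
          rw [MeasureTheory.integral_prod_symm _ hint2]
      _ = ∫ y in Set.Ici b, (α + β * (mx + ρ * (y - my))
            + γ * (τ ^ 2 + (mx + ρ * (y - my)) ^ 2)) * npdf my sy y := by
          apply MeasureTheory.integral_congr_ae
          filter_upwards with y
          have hn : ∀ x : ℝ, (α + β * x + γ * x ^ 2) * N (x, y)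
              = ((α + β * x + γ * x ^ 2) * npdf (mx + ρ * (y - my)) τ x) * npdf my sy y := by
            intro x; unfold N; ring
          rw [MeasureTheory.integral_congr_ae (Filter.Eventually.of_forall hn),
            MeasureTheory.integral_mul_const, integral_poly_npdf α β γ _ hτ]
  -- integrability for k = 0, 2, 1
  have hI0 : Integrable (fun p : ℝ × ℝ => (1 + 0 * p.1 + 0 * p.1 ^ 2) * N p) :=
    hInt 1 0 0 (fun x => by norm_num)
  have hI2 : Integrable (fun p : ℝ × ℝ => (0 + 0 * p.1 + 1 * p.1 ^ 2) * N p) :=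
    hInt 0 0 1 (fun x => by nlinarith [sq_nonneg x])
  have hI1 : Integrable (fun p : ℝ × ℝ => (0 + 1 * p.1 + 0 * p.1 ^ 2) * N p) := by
    have hbd : Integrable (fun p : ℝ × ℝ => (1 + p.1 ^ 2) * N p) :=
      (hI0.add hI2).congr (Filter.Eventually.of_forall fun p => by
        show (1 + 0 * p.1 + 0 * p.1 ^ 2) * N p + (0 + 0 * p.1 + 1 * p.1 ^ 2) * N p
          = (1 + p.1 ^ 2) * N p
        ring)
    apply hbd.mono'
    · apply Continuous.aestronglyMeasurable
      have h1 : Continuous fun p : ℝ × ℝ => (0 + 1 * p.1 + 0 * p.1 ^ 2) := by fun_prop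
      exact h1.mul hNcont
    · filter_upwards with p
      have he : (0 + 1 * p.1 + 0 * p.1 ^ 2) = p.1 := by ring
      rw [Real.norm_eq_abs, abs_mul, he, abs_of_nonneg (hNnonneg p)]
      have habs : |p.1| ≤ 1 + p.1 ^ 2 := by
        nlinarith [sq_nonneg (|p.1| - 1), sq_abs p.1, abs_nonneg p.1]
      exact mul_le_mul_of_nonneg_right habs (hNnonneg p)
  -- computed censored integrals
  have e1 : ∫ p in (Set.univ ×ˢ Set.Ici b : Set (ℝ × ℝ)), p.1 * f p.1 p.2
      = mx * (1 - stdCdf bstar) + ρ * sy * stdPdf bstar := by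
    have h0 : ∫ p in (Set.univ ×ˢ Set.Ici b : Set (ℝ × ℝ)), p.1 * f p.1 p.2
        = ∫ p in (Set.univ ×ˢ Set.Ici b : Set (ℝ × ℝ)), (0 + 1 * p.1 + 0 * p.1 ^ 2) * f p.1 p.2 :=
      MeasureTheory.integral_congr_ae (Filter.Eventually.of_forall fun p => by
        show p.1 * f p.1 p.2 = (0 + 1 * p.1 + 0 * p.1 ^ 2) * f p.1 p.2
        ring)
    rw [h0, comp 0 1 0 hI1, MeasureTheory.integral_Ici_eq_integral_Ioi]
    have hpoly : (fun y : ℝ => (0 + 1 * (mx + ρ * (y - my))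
          + 0 * (τ ^ 2 + (mx + ρ * (y - my)) ^ 2)) * npdf my sy y)
        = fun y : ℝ => ((mx - ρ * my) + ρ * y + 0 * y ^ 2) * npdf my sy y :=
      funext fun y => by ring
    rw [hpoly, integral_Ioi_poly_npdf _ _ _ my b hsy, ← hbstar]
    ring
  have e2 : ∫ p in (Set.univ ×ˢ Set.Ici b : Set (ℝ × ℝ)), p.1 ^ 2 * f p.1 p.2
      = (τ ^ 2 + mx ^ 2 + ρ ^ 2 * sy ^ 2) * (1 - stdCdf bstar)
        + (2 * ρ * mx * sy + ρ ^ 2 * sy ^ 2 * bstar) * stdPdf bstar := by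
    have h0 : ∫ p in (Set.univ ×ˢ Set.Ici b : Set (ℝ × ℝ)), p.1 ^ 2 * f p.1 p.2
        = ∫ p in (Set.univ ×ˢ Set.Ici b : Set (ℝ × ℝ)), (0 + 0 * p.1 + 1 * p.1 ^ 2) * f p.1 p.2 :=
      MeasureTheory.integral_congr_ae (Filter.Eventually.of_forall fun p => by
        show p.1 ^ 2 * f p.1 p.2 = (0 + 0 * p.1 + 1 * p.1 ^ 2) * f p.1 p.2
        ring)
    rw [h0, comp 0 0 1 hI2, MeasureTheory.integral_Ici_eq_integral_Ioi]
    have hpoly : (fun y : ℝ => (0 + 0 * (mx + ρ * (y - my))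
          + 1 * (τ ^ 2 + (mx + ρ * (y - my)) ^ 2)) * npdf my sy y)
        = fun y : ℝ => ((τ ^ 2 + (mx - ρ * my) ^ 2) + (2 * (mx - ρ * my) * ρ) * y
            + (ρ ^ 2) * y ^ 2) * npdf my sy y :=
      funext fun y => by ring
    rw [hpoly, integral_Ioi_poly_npdf _ _ _ my b hsy, ← hbstar]
    ring
  have hN0 : 0 < 1 - stdCdf bstar := one_sub_stdCdf_pos bstar
  rw [e2, hμhat, e1, hlam, hτsq, hρdef]
  field_simp
  ring
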